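/- Let α ∈ L²(Ω, ℝ^{q_j}) and, for ℓ = 0, …, j−1, let z̃_ℓ ∈ L²(Ω, ℝ^{q_ℓ}) and γ_ℓ ∈ L²(Ω, ℝ^{q_ℓ}) be given random vectors. Define B = [B_0, …, B_{j−1}] ∈ ℝ^{q_j×q} with blocks B_k = E_{α z̃_k} ∈ ℝ^{q_j×q_k}, and A = (A_{ℓk})_{ℓ,k=0}^{j−1} ∈ ℝ^{q×q} with blocks A_{ℓk} = E_{γ_ℓ z̃_k} ∈ ℝ^{q_ℓ×q_k}, where q = q_0 + … + q_{j−1}. Suppose I − A is invertible and set [C_0, …, C_{j−1}] = B(I − A)^{−1} with C_ℓ ∈ ℝ^{q_j×q_ℓ}. Then the random vector v defined by v(ω) = α(ω) + Σ_{ℓ=0}^{j−1} C_ℓ γ_ℓ(ω) satisfies the Fredholm-type integral equation v(ω) = α(ω) + Σ_{ℓ=0}^{j−1} (∫_Ω v(ξ) z̃_ℓ(ξ)^T dμ(ξ)) γ_ℓ(ω), i.e. v(ω) = α(ω) + Σ_{ℓ=0}^{j−1} E_{v z̃_ℓ} γ_ℓ(ω) for all ω ∈ Ω. -/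

import Mathlib

open MeasureTheory Matrix Finset Filter

noncomputable section

/-- The covariance matrix `E_{xy}` of two random vectors. -/
def covM {Ω : Type} [MeasurableSpace Ω] (μ : Measure Ω) {m n : ℕ}
    (x : Ω → Fin m → ℝ) (y : Ω → Fin n → ℝ) : Matrix (Fin m) (Fin n) ℝ :=
  Matrix.of fun i j => ∫ ω, x ω i * y ω j ∂μ

/-- The squared norm `‖x‖²_Ω` of a random vector. -/
def sqnormOm {Ω : Type} [MeasurableSpace Ω] (μ : Measure Ω) {m : ℕ}
    (x : Ω → Fin m → ℝ) : ℝ :=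
  ∫ ω, ∑ j, (x ω j) ^ 2 ∂μ

/-- The Moore–Penrose conditions. -/
def IsMoorePenrose {m n : ℕ} (A : Matrix (Fin m) (Fin n) ℝ)
    (B : Matrix (Fin n) (Fin m) ℝ) : Prop :=
  A * B * A = A ∧ B * A * B = B ∧ (A * B)ᵀ = A * B ∧ (B * A)ᵀ = B * A

/-- The Moore–Penrose pseudoinverse `M^†`. -/
def mpinv {m n : ℕ} (A : Matrix (Fin m) (Fin n) ℝ) : Matrix (Fin n) (Fin m) ℝ :=
  Classical.epsilon fun B => IsMoorePenrose A B

/-- The symmetric positive semidefinite square root `M^{1/2}` of a PSD matrix. -/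
def msqrtM {n : ℕ} (M : Matrix (Fin n) (Fin n) ℝ) : Matrix (Fin n) (Fin n) ℝ :=
  Classical.epsilon fun S => S.PosSemidef ∧ S * S = M

/-- Squared Frobenius norm. -/
def frobSq {m n : ℕ} (A : Matrix (Fin m) (Fin n) ℝ) : ℝ := ∑ i, ∑ j, (A i j) ^ 2

/-- `(u, v, σ)` is a singular value decomposition of `A`:
`A = ∑ k σ_k u_k v_kᵀ` with orthonormal `u`'s and `v`'s and
nonnegative singular values in decreasing order. -/
def IsSVDOf {m n : ℕ} (A : Matrix (Fin m) (Fin n) ℝ)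
    (u : ℕ → Fin m → ℝ) (v : ℕ → Fin n → ℝ) (σ : ℕ → ℝ) : Prop :=
  (∀ k l, k < min m n → l < min m n → u k ⬝ᵥ u l = if k = l then (1 : ℝ) else 0) ∧
  (∀ k l, k < min m n → l < min m n → v k ⬝ᵥ v l = if k = l then (1 : ℝ) else 0) ∧
  (∀ k, 0 ≤ σ k) ∧ Antitone σ ∧ (∀ k, min m n ≤ k → σ k = 0) ∧
  A = ∑ k ∈ Finset.range (min m n), σ k • vecMulVec (u k) (v k)

lemma memℒp_comp_proj {Ω : Type} [MeasurableSpace Ω] {μ : Measure Ω} {m : ℕ}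
    {x : Ω → Fin m → ℝ} (hx : MemLp x 2 μ) (i : Fin m) :
    MemLp (fun ω => x ω i) 2 μ :=
  (ContinuousLinearMap.proj (R := ℝ) (φ := fun _ : Fin m => ℝ) i).comp_memLp' hx

lemma integrable_mul_of_memℒp_two {Ω : Type} [MeasurableSpace Ω] {μ : Measure Ω}
    {f g : Ω → ℝ} (hf : MemLp f 2 μ) (hg : MemLp g 2 μ) :
    Integrable (fun ω => f ω * g ω) μ := by
  rw [← memLp_one_iff_integrable]
  have h := hg.smul hf (p := 2) (q := 2) (r := 1)
  simpa [smul_eq_mul, Pi.mul_def] using h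

/-- if `I − A` is invertible (the block matrix with blocks
`A_{ℓk} = E_{γ_ℓ z̃_k}`), and `[C_0, …, C_{j−1}] = B (I − A)⁻¹` where `B` has
blocks `B_k = E_{α z̃_k}`, then `v(ω) = α(ω) + Σ_ℓ C_ℓ γ_ℓ(ω)` solves the
Fredholm-type equation `v(ω) = α(ω) + Σ_ℓ E_{v z̃_ℓ} γ_ℓ(ω)`. -/
theorem stmt16 {Ω : Type} [MeasurableSpace Ω] (μ : Measure Ω) [IsProbabilityMeasure μ]
    {n qj : ℕ} (qv : Fin n → ℕ)
    (α : Ω → Fin qj → ℝ) (ztil γ : ∀ ℓ, Ω → Fin (qv ℓ) → ℝ)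
    (hα : MemLp α 2 μ) (hztil : ∀ ℓ, MemLp (ztil ℓ) 2 μ) (hγ : ∀ ℓ, MemLp (γ ℓ) 2 μ)
    (Abig : Matrix ((ℓ : Fin n) × Fin (qv ℓ)) ((ℓ : Fin n) × Fin (qv ℓ)) ℝ)
    (hAbig : ∀ (ℓ k : Fin n) (a : Fin (qv ℓ)) (b : Fin (qv k)),
      Abig ⟨ℓ, a⟩ ⟨k, b⟩ = covM μ (γ ℓ) (ztil k) a b)
    (Bbig : Matrix (Fin qj) ((ℓ : Fin n) × Fin (qv ℓ)) ℝ)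
    (hBbig : ∀ (k : Fin n) (i : Fin qj) (b : Fin (qv k)),
      Bbig i ⟨k, b⟩ = covM μ α (ztil k) i b)
    (hinv : IsUnit (1 - Abig).det)
    (C : ∀ ℓ, Matrix (Fin qj) (Fin (qv ℓ)) ℝ)
    (hC : ∀ (ℓ : Fin n) (i : Fin qj) (a : Fin (qv ℓ)),
      C ℓ i a = (Bbig * (1 - Abig)⁻¹) i ⟨ℓ, a⟩)
    (v : Ω → Fin qj → ℝ)
    (hv : ∀ ω, v ω = α ω + ∑ ℓ, C ℓ *ᵥ γ ℓ ω) :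
    ∀ ω, v ω = α ω + ∑ ℓ, covM μ v (ztil ℓ) *ᵥ γ ℓ ω := by
  have key : ∀ ℓ, covM μ v (ztil ℓ) = C ℓ := by
    intro ℓ
    ext i b
    have hz := memℒp_comp_proj (hztil ℓ) b
    have hαz : Integrable (fun ω => α ω i * ztil ℓ ω b) μ :=
      integrable_mul_of_memℒp_two (memℒp_comp_proj hα i) hz
    have hγz : ∀ (k : Fin n) (a : Fin (qv k)),
        Integrable (fun ω => γ k ω a * ztil ℓ ω b) μ :=
      fun k a => integrable_mul_of_memℒp_two (memℒp_comp_proj (hγ k) a) hz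
    have hcov : covM μ v (ztil ℓ) i b
        = Bbig i ⟨ℓ, b⟩ + ∑ k, ∑ a, C k i a * Abig ⟨k, a⟩ ⟨ℓ, b⟩ := by
      have h1 : covM μ v (ztil ℓ) i b
          = ∫ ω, (α ω i * ztil ℓ ω b
              + ∑ k, ∑ a, C k i a * (γ k ω a * ztil ℓ ω b)) ∂μ := by
        unfold covM
        simp only [Matrix.of_apply]
        congr 1; funext ω
        rw [hv ω]
        simp [Matrix.mulVec, dotProduct, Finset.sum_apply, add_mul,
          Finset.sum_mul, mul_assoc]
      have h2 : Integrable
          (fun ω => ∑ k, ∑ a, C k i a * (γ k ω a * ztil ℓ ω b)) μ :=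
        integrable_finset_sum _ fun k _ =>
          integrable_finset_sum _ fun a _ => (hγz k a).const_mul _
      rw [h1, integral_add hαz h2]
      congr 1
      · rw [hBbig]; rfl
      · rw [integral_finset_sum _ fun k _ =>
          integrable_finset_sum _ fun a _ => (hγz k a).const_mul _]
        refine Finset.sum_congr rfl fun k _ => ?_
        rw [integral_finset_sum _ fun a _ => (hγz k a).const_mul _]
        refine Finset.sum_congr rfl fun a _ => ?_
        rw [MeasureTheory.integral_const_mul, hAbig]; rfl
    have hCbA : Bbig * (1 - Abig)⁻¹ * (1 - Abig) = Bbig := by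
      rw [Matrix.mul_assoc, Matrix.nonsing_inv_mul _ hinv, Matrix.mul_one]
    have hsum : ∑ k, ∑ a, C k i a * Abig ⟨k, a⟩ ⟨ℓ, b⟩
        = (Bbig * (1 - Abig)⁻¹ * Abig) i ⟨ℓ, b⟩ := by
      rw [Matrix.mul_apply, ← Finset.univ_sigma_univ, Finset.sum_sigma]
      exact Finset.sum_congr rfl fun k _ => Finset.sum_congr rfl fun a _ => by
        rw [hC]
    have hE : Bbig i ⟨ℓ, b⟩ = (Bbig * (1 - Abig)⁻¹) i ⟨ℓ, b⟩
        - (Bbig * (1 - Abig)⁻¹ * Abig) i ⟨ℓ, b⟩ := by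
      conv_lhs => rw [← hCbA]
      rw [Matrix.mul_sub, Matrix.mul_one, Matrix.sub_apply]
    rw [hcov, hC, hsum, hE]
    ring
  intro ω
  simp_rw [key]
  exact hv ω
end
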